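/- Let C be an irreducible component of a general KCM with infection probability q and let x be a site in the closure {η}_L^ω (which is the same for all η ∈ C). Then for every fixed ξ ∈ ∏_{y∈L∖{x}} S_y such that the event {η ∈ C, η_{L∖{x}} = ξ} has positive π_L-probability, either every η ∈ C with η_{L∖{x}} = ξ satisfies η_x ∈ I_x, or the conditional law of η_x under π_L(·|C, η_{L∖{x}} = ξ) equals π_x. In particular, π_L(η_x ∈ I_x | C, η_{L∖{x}} = ξ) ≥ q. -/

import Mathlib

open scoped Classical

namespace KCM

/-- A full configuration assigns a state to every site of `ℤ`.  The boundary
condition is the restriction of a configuration outside the volume. -/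
abbrev Config (S : ℤ → Type) : Type := ∀ x : ℤ, S x

variable {S : ℤ → Type}

/-- The constraint at site `x` is satisfied in configuration `η`: some update
rule of `x` has all its sites infected. -/
def Constraint (I : ∀ x : ℤ, Set (S x)) (U : ℤ → Finset (Finset ℤ)) (x : ℤ)
    (η : Config S) : Prop :=
  ∃ u ∈ U x, ∀ y ∈ u, η y ∈ I y

/-- A legal transition of the KCM on volume `L`: the two configurations agree
off a single site `x ∈ L` whose constraint is satisfied. -/
def Step (I : ∀ x : ℤ, Set (S x)) (U : ℤ → Finset (Finset ℤ)) (L : Finset ℤ)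
    (η η' : Config S) : Prop :=
  ∃ x ∈ L, Constraint I U x η ∧ ∀ y : ℤ, y ≠ x → η' y = η y

/-- `η` and `η'` belong to the same irreducible component of the KCM on volume
`L` (connected component of the transition graph on configurations). -/
def Reach (I : ∀ x : ℤ, Set (S x)) (U : ℤ → Finset (Finset ℤ)) (L : Finset ℤ)
    (η η' : Config S) : Prop :=
  Relation.ReflTransGen (fun ζ ζ' => Step I U L ζ ζ' ∨ Step I U L ζ' ζ) η η'

/-- The closure `{η}_L^ω`: the set of sites of `L` whose state can eventually
be updated starting from `η`. -/
def closure (I : ∀ x : ℤ, Set (S x)) (U : ℤ → Finset (Finset ℤ)) (L : Finset ℤ)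
    (η : Config S) : Set ℤ :=
  {x | x ∈ L ∧ ∃ η', Reach I U L η η' ∧ Constraint I U x η'}

/-- Replace the states of `η` inside `Λ` by `ξ`. -/
def glue (Λ : Finset ℤ) (η : Config S) (ξ : ∀ x : {y : ℤ // y ∈ Λ}, S x.1) :
    Config S :=
  fun x => if h : x ∈ Λ then ξ ⟨x, h⟩ else η x

variable [∀ x, Fintype (S x)]

/-- Expectation of `f` when the states of `η` inside `Λ` are resampled from the
product of the measures `π x`, `x ∈ Λ`, conditioned on the event `P`. -/
noncomputable def expOn (π : ∀ x : ℤ, S x → ℝ) (Λ : Finset ℤ)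
    (P : Config S → Prop) (η : Config S) (f : Config S → ℝ) : ℝ :=
  (∑ ξ : ∀ x : {y : ℤ // y ∈ Λ}, S x.1,
      if P (glue Λ η ξ) then (∏ x : {y : ℤ // y ∈ Λ}, π x.1 (ξ x)) * f (glue Λ η ξ) else 0) /
  (∑ ξ : ∀ x : {y : ℤ // y ∈ Λ}, S x.1,
      if P (glue Λ η ξ) then (∏ x : {y : ℤ // y ∈ Λ}, π x.1 (ξ x)) else 0)

/-- Variance of `f` when the states of `η` inside `Λ` are resampled from the
product of the measures `π x`, `x ∈ Λ`, conditioned on the event `P`. -/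
noncomputable def varOn (π : ∀ x : ℤ, S x → ℝ) (Λ : Finset ℤ)
    (P : Config S → Prop) (η : Config S) (f : Config S → ℝ) : ℝ :=
  expOn π Λ P η (fun ζ => (f ζ - expOn π Λ P η f) ^ 2)


/-! ### Auxiliary material -/

/-- Update the configuration `a` at the single site `x` to the state `s`. -/
def upd (x : ℤ) (a : Config S) (s : S x) : Config S :=
  fun y => if h : y = x then cast (congrArg S h).symm s else a y

lemma upd_self (x : ℤ) (a : Config S) (s : S x) : upd x a s x = s := by
  simp [upd]

lemma upd_ne (x : ℤ) (a : Config S) (s : S x) {y : ℤ} (h : y ≠ x) :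
    upd x a s y = a y := by
  simp [upd, h]

lemma upd_eq_upd {x : ℤ} {a b : Config S} (h : ∀ y : ℤ, y ≠ x → a y = b y)
    (s : S x) : upd x a s = upd x b s := by
  funext y
  by_cases hy : y = x
  · subst hy; simp [upd]
  · rw [upd_ne _ _ _ hy, upd_ne _ _ _ hy, h y hy]

lemma upd_eq_self (x : ℤ) (a : Config S) : upd x a (a x) = a := by
  funext y
  by_cases hy : y = x
  · subst hy; simp [upd]
  · exact upd_ne _ _ _ hy

/-- If a constraint holds and the state at `x` is healthy, then the witnessing
rule does not use site `x`, so the constraint survives updating `x`. -/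
lemma Constraint.upd {I : ∀ x : ℤ, Set (S x)} {U : ℤ → Finset (Finset ℤ)}
    {z x : ℤ} {a : Config S} (hc : Constraint I U z a) (hax : a x ∉ I x)
    (s : S x) : Constraint I U z (upd x a s) := by
  obtain ⟨u, hu, hsat⟩ := hc
  refine ⟨u, hu, fun y hy => ?_⟩
  have hyx : y ≠ x := by rintro rfl; exact hax (hsat y hy)
  rw [upd_ne _ _ _ hyx]; exact hsat y hy

/-- A constraint at `z` whose rules avoid `z` only depends on the states off
`z`. -/
lemma Constraint.of_agree {I : ∀ x : ℤ, Set (S x)} {U : ℤ → Finset (Finset ℤ)}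
    {z : ℤ} {a b : Config S} (hz : ∀ u ∈ U z, z ∉ u)
    (hab : ∀ y : ℤ, y ≠ z → b y = a y) (hc : Constraint I U z a) :
    Constraint I U z b := by
  obtain ⟨u, hu, hsat⟩ := hc
  refine ⟨u, hu, fun y hy => ?_⟩
  have hyz : y ≠ z := fun h => hz u hu (h ▸ hy)
  rw [hab y hyz]; exact hsat y hy

lemma reach_symm {I : ∀ x : ℤ, Set (S x)} {U : ℤ → Finset (Finset ℤ)}
    {L : Finset ℤ} {a b : Config S} (h : Reach I U L a b) : Reach I U L b a :=
  (@Relation.ReflTransGen.stdSymm _ _ ⟨fun _ _ h => h.symm⟩).symm _ _ h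

lemma reach_flip {I : ∀ x : ℤ, Set (S x)} {U : ℤ → Finset (Finset ℤ)}
    {L : Finset ℤ} {x : ℤ} (hxL : x ∈ L) {a : Config S}
    (hc : Constraint I U x a) (s : S x) : Reach I U L a (upd x a s) :=
  Relation.ReflTransGen.single
    (Or.inl ⟨x, hxL, hc, fun y hy => upd_ne _ _ _ hy⟩)

/-- Key lemma: if `a` is healthy at `x` and can reach a configuration where
the constraint at `x` holds, then `a` can reach any update of itself at `x`. -/
lemma reach_upd {I : ∀ x : ℤ, Set (S x)} {U : ℤ → Finset (Finset ℤ)}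
    {L : Finset ℤ} {x : ℤ} (hxL : x ∈ L) (hUx : ∀ u ∈ U x, x ∉ u)
    {a ζ : Config S} (hre : Reach I U L a ζ) (hcζ : Constraint I U x ζ)
    (hax : a x ∉ I x) (s : S x) : Reach I U L a (upd x a s) := by
  induction hre using Relation.ReflTransGen.head_induction_on with
  | refl => exact reach_flip hxL hcζ s
  | @head a c hac hcζ' ih =>
    -- extract the common data from the (symmetrised) step
    obtain ⟨z, hzL, hcz, hagree⟩ :
        ∃ z ∈ L, (Constraint I U z a ∨ Constraint I U z c) ∧
          ∀ y : ℤ, y ≠ z → c y = a y := by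
      rcases hac with ⟨z, hzL, hcz, hagree⟩ | ⟨z, hzL, hcz, hagree⟩
      · exact ⟨z, hzL, Or.inl hcz, hagree⟩
      · exact ⟨z, hzL, Or.inr hcz, fun y hy => (hagree y hy).symm⟩
    by_cases hzx : z = x
    · subst hzx
      have hca : Constraint I U z a := by
        rcases hcz with h | h
        · exact h
        · exact h.of_agree hUx (fun y hy => (hagree y hy).symm)
      exact reach_flip hzL hca s
    · have hcx : c x = a x := hagree x (fun h => hzx h.symm)
      have hcnot : c x ∉ I x := by rw [hcx]; exact hax
      have h1 : Reach I U L a c := Relation.ReflTransGen.single hac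
      have h2 : Reach I U L c (upd x c s) := ih hcnot
      have hagree' : ∀ y : ℤ, y ≠ z → upd x c s y = upd x a s y := by
        intro y hy
        by_cases hyx : y = x
        · subst hyx; rw [upd_self, upd_self]
        · rw [upd_ne _ _ _ hyx, upd_ne _ _ _ hyx]; exact hagree y hy
      have h3 : Reach I U L (upd x c s) (upd x a s) := by
        rcases hcz with h | h
        · exact Relation.ReflTransGen.single
            (Or.inr ⟨z, hzL, h.upd hax s, hagree'⟩)
        · exact Relation.ReflTransGen.single
            (Or.inl ⟨z, hzL, h.upd hcnot s, fun y hy => (hagree' y hy).symm⟩)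
      exact (h1.trans h2).trans h3

instance uniqueSingleton (x : ℤ) : Unique {y : ℤ // y ∈ ({x} : Finset ℤ)} :=
  ⟨⟨⟨x, Finset.mem_singleton_self x⟩⟩,
    fun z => Subtype.ext (Finset.mem_singleton.mp z.2)⟩

/-- The explicit equivalence between states on the singleton `{x}` and `S x`. -/
def singletonEquiv (x : ℤ) :
    (∀ z : {y : ℤ // y ∈ ({x} : Finset ℤ)}, S z.1) ≃ S x where
  toFun ξ := ξ ⟨x, Finset.mem_singleton_self x⟩
  invFun s z := cast (congrArg S (Finset.mem_singleton.mp z.2)).symm s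
  left_inv ξ := by
    funext z
    obtain ⟨y, hy⟩ := z
    obtain rfl : y = x := Finset.mem_singleton.mp hy
    simp
  right_inv s := by simp

lemma glue_singleton (x : ℤ) (η : Config S)
    (ξ : ∀ z : {y : ℤ // y ∈ ({x} : Finset ℤ)}, S z.1) :
    glue {x} η ξ = upd x η (ξ ⟨x, Finset.mem_singleton_self x⟩) := by
  funext y
  by_cases hy : y = x
  · subst hy
    simp [glue, upd]
  · have : y ∉ ({x} : Finset ℤ) := by simpa using hy
    simp [glue, this, upd_ne _ _ _ hy]

lemma expOn_singleton (π : ∀ x : ℤ, S x → ℝ) (x : ℤ) (P : Config S → Prop)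
    (η : Config S) (f : Config S → ℝ) :
    expOn π {x} P η f =
      (∑ s : S x, if P (upd x η s) then π x s * f (upd x η s) else 0) /
        (∑ s : S x, if P (upd x η s) then π x s else 0) := by
  unfold expOn
  congr 1
  · refine Fintype.sum_equiv (singletonEquiv (S := S) x) _ _ fun ξ => ?_
    have hg := glue_singleton x η ξ
    have hp : (∏ z : {y : ℤ // y ∈ ({x} : Finset ℤ)}, π z.1 (ξ z)) =
        π x (ξ ⟨x, Finset.mem_singleton_self x⟩) := Fintype.prod_unique _
    rw [hg, hp]; rfl
  · refine Fintype.sum_equiv (singletonEquiv (S := S) x) _ _ fun ξ => ?_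
    have hg := glue_singleton x η ξ
    have hp : (∏ z : {y : ℤ // y ∈ ({x} : Finset ℤ)}, π z.1 (ξ z)) =
        π x (ξ ⟨x, Finset.mem_singleton_self x⟩) := Fintype.prod_unique _
    rw [hg, hp]; rfl

/-- For `x` in the closure and any configuration `η` of the
irreducible component of `η₀` (fixing `ξ = η` off `x`): either all elements of
the component agreeing with `η` off `x` are infected at `x`, or the conditional
law of the state at `x` given the rest and the component is `π x`; in both
cases the conditional probability of infection at `x` is at least `q`. -/
theorem statement4 (S : ℤ → Type) [∀ x, Fintype (S x)] (L : Finset ℤ)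
    (q R : ℝ)
    (hq0 : 0 < q) (hq1 : q ≤ 1) (hR : 1 ≤ R)
    (π : ∀ x : ℤ, S x → ℝ) (I : ∀ x : ℤ, Set (S x)) (U : ℤ → Finset (Finset ℤ))
    (hπpos : ∀ (x : ℤ) (s : S x), 0 < π x s)
    (hπsum : ∀ x : ℤ, ∑ s : S x, π x s = 1)
    (hπI : ∀ x : ℤ, q ≤ ∑ s : S x, if s ∈ I x then π x s else 0)
    (hUx : ∀ x ∈ L, ∀ u ∈ U x, x ∉ u)
    (hUR : ∀ x ∈ L, ∀ u ∈ U x, ∀ y ∈ u, ((|y - x| : ℤ) : ℝ) ≤ R)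
    (η₀ : Config S) (x : ℤ) (hx : x ∈ closure I U L η₀)
    (η : Config S) (hη : Reach I U L η₀ η) :
    ((∀ η' : Config S, Reach I U L η₀ η' → (∀ y : ℤ, y ≠ x → η' y = η y) →
        η' x ∈ I x) ∨
      (∀ s : S x,
        expOn π {x} (Reach I U L η₀) η (fun ζ => if ζ x = s then (1 : ℝ) else 0) =
          π x s)) ∧
      q ≤ expOn π {x} (Reach I U L η₀) η (fun ζ => if ζ x ∈ I x then (1 : ℝ) else 0) := by
  obtain ⟨hxL, ζ0, hζ0re, hζ0c⟩ := hx
  set P : Config S → Prop := Reach I U L η₀ with hP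
  by_cases hAll : ∀ η' : Config S, Reach I U L η₀ η' →
      (∀ y : ℤ, y ≠ x → η' y = η y) → η' x ∈ I x
  · -- every configuration in the fibre is infected at `x`
    refine ⟨Or.inl hAll, ?_⟩
    rw [expOn_singleton]
    have hηself : upd x η (η x) = η := upd_eq_self x η
    have hden_pos : 0 < ∑ s : S x, if P (upd x η s) then π x s else 0 := by
      refine lt_of_lt_of_le (hπpos x (η x)) ?_
      have hterm : (if P (upd x η (η x)) then π x (η x) else 0) = π x (η x) := by
        rw [hηself]; exact if_pos hη
      calc π x (η x) = if P (upd x η (η x)) then π x (η x) else 0 := hterm.symm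
        _ ≤ _ := by
            refine Finset.single_le_sum
              (f := fun s : S x => if P (upd x η s) then π x s else 0)
              (fun s _ => ?_) (Finset.mem_univ (η x))
            show (0 : ℝ) ≤ if P (upd x η s) then π x s else 0
            by_cases h : P (upd x η s)
            · rw [if_pos h]; exact (hπpos x s).le
            · rw [if_neg h]
    have hnum : (∑ s : S x, if P (upd x η s) then
        π x s * (if (upd x η s) x ∈ I x then (1 : ℝ) else 0) else 0) =
        ∑ s : S x, if P (upd x η s) then π x s else 0 := by
      refine Finset.sum_congr rfl fun s _ => ?_
      by_cases hp : P (upd x η s)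
      · rw [if_pos hp, if_pos hp]
        have hs : (upd x η s) x ∈ I x :=
          hAll _ hp (fun y hy => upd_ne _ _ _ hy)
        rw [if_pos hs, mul_one]
      · rw [if_neg hp, if_neg hp]
    rw [hnum, div_self (ne_of_gt hden_pos)]
    exact hq1
  · -- some configuration in the fibre is healthy at `x`: the law is `π x`
    push_neg at hAll
    obtain ⟨η', hη're, hη'agree, hη'x⟩ := hAll
    have hre : ∀ s : S x, P (upd x η s) := by
      intro s
      have h1 : Reach I U L η' ζ0 := (reach_symm hη're).trans hζ0re
      have h2 : Reach I U L η' (upd x η' s) :=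
        reach_upd hxL (hUx x hxL) h1 hζ0c hη'x s
      have h3 : upd x η' s = upd x η s := upd_eq_upd hη'agree s
      exact hη're.trans (h3 ▸ h2)
    have hden : (∑ s : S x, if P (upd x η s) then π x s else 0) = 1 := by
      rw [← hπsum x]
      exact Finset.sum_congr rfl fun s _ => if_pos (hre s)
    constructor
    · refine Or.inr fun s => ?_
      rw [expOn_singleton, hden, div_one]
      have : (∑ t : S x, if P (upd x η t) then
          π x t * (if (upd x η t) x = s then (1 : ℝ) else 0) else 0) =
          ∑ t : S x, if t = s then π x t else 0 := by
        refine Finset.sum_congr rfl fun t _ => ?_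
        rw [if_pos (hre t), upd_self]
        by_cases hts : t = s
        · rw [if_pos hts, if_pos hts, mul_one]
        · rw [if_neg hts, if_neg hts, mul_zero]
      rw [this, Finset.sum_ite_eq' Finset.univ s (π x), if_pos (Finset.mem_univ s)]
    · rw [expOn_singleton, hden, div_one]
      have : (∑ t : S x, if P (upd x η t) then
          π x t * (if (upd x η t) x ∈ I x then (1 : ℝ) else 0) else 0) =
          ∑ t : S x, if t ∈ I x then π x t else 0 := by
        refine Finset.sum_congr rfl fun t _ => ?_
        rw [if_pos (hre t), upd_self]
        by_cases hts : t ∈ I x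
        · rw [if_pos hts, if_pos hts, mul_one]
        · rw [if_neg hts, if_neg hts, mul_zero]
      rw [this]
      exact hπI x

end KCM
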